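/- Let R be a normed ring, N a finitely generated R-module with filling norm ‖·‖_N, and suppose N is an internal direct summand of a free R-module F equipped with an ℓ¹-norm ‖·‖₁. Then ‖·‖_N and the restriction of ‖·‖₁ to N are equivalent norms on N. -/
import Mathlib


variable {R : Type*} [Ring R]

/-- The ℓ¹-norm on the finitely generated based free `R`-module `Λ → R`. -/
noncomputable def l1Norm {Λ : Type*} [Fintype Λ] (ν : RingNorm R) (f : Λ → R) : ℝ :=
  ∑ x, ν (f x)

/-- The ℓ¹-norm on a free `R`-module with basis `Λ`, realized as `Λ →₀ R`. -/
noncomputable def l1NormF {Λ : Type*} (ν : RingNorm R) (f : Λ →₀ R) : ℝ :=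
  f.sum fun _ r => ν r

/-- The filling norm on a module `P` induced by a surjection `ρ : (Λ → R) → P`. -/
noncomputable def fillingNorm {Λ : Type*} [Fintype Λ] {P : Type*} [AddCommGroup P] [Module R P]
    (ν : RingNorm R) (ρ : (Λ → R) →ₗ[R] P) (p : P) : ℝ :=
  sInf {c : ℝ | ∃ x : Λ → R, ρ x = p ∧ l1Norm ν x = c}

lemma nu_sum_le (ν : RingNorm R) {ι : Type*} (s : Finset ι) (g : ι → R) :
    ν (∑ i ∈ s, g i) ≤ ∑ i ∈ s, ν (g i) := by
  classical
  induction s using Finset.cons_induction with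
  | empty => simp
  | cons a s ha ih =>
    rw [Finset.sum_cons, Finset.sum_cons]
    exact le_trans (map_add_le_add ν _ _) (by linarith)

lemma l1Norm_nonneg {Λ : Type*} [Fintype Λ] (ν : RingNorm R) (f : Λ → R) :
    0 ≤ l1Norm ν f :=
  Finset.sum_nonneg fun x _ => apply_nonneg ν _

lemma l1Norm_smul_le {Λ : Type*} [Fintype Λ] (ν : RingNorm R) (r : R) (f : Λ → R) :
    l1Norm ν (r • f) ≤ ν r * l1Norm ν f := by
  unfold l1Norm
  rw [Finset.mul_sum]
  exact Finset.sum_le_sum fun x _ => map_mul_le_mul ν r (f x)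

lemma l1Norm_sum_le {Λ : Type*} [Fintype Λ] (ν : RingNorm R) {ι : Type*} (s : Finset ι)
    (f : ι → Λ → R) : l1Norm ν (∑ i ∈ s, f i) ≤ ∑ i ∈ s, l1Norm ν (f i) := by
  unfold l1Norm
  rw [Finset.sum_comm]
  refine Finset.sum_le_sum fun x _ => ?_
  simpa using nu_sum_le ν s (fun i => f i x)

lemma l1NormF_eq {Λ : Type*} (ν : RingNorm R) (f : Λ →₀ R) {s : Finset Λ}
    (h : f.support ⊆ s) : l1NormF ν f = ∑ x ∈ s, ν (f x) :=
  Finsupp.sum_of_support_subset f h _ (fun i _ => map_zero ν)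

lemma l1NormF_nonneg {Λ : Type*} (ν : RingNorm R) (f : Λ →₀ R) : 0 ≤ l1NormF ν f := by
  rw [l1NormF_eq ν f (subset_refl _)]
  exact Finset.sum_nonneg fun x _ => apply_nonneg ν _

lemma l1NormF_add_le {Λ : Type*} (ν : RingNorm R) (f g : Λ →₀ R) :
    l1NormF ν (f + g) ≤ l1NormF ν f + l1NormF ν g := by
  classical
  rw [l1NormF_eq ν (f + g) (Finsupp.support_add),
    l1NormF_eq ν f (Finset.subset_union_left (s₂ := g.support)),
    l1NormF_eq ν g (Finset.subset_union_right (s₁ := f.support)), ← Finset.sum_add_distrib]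
  exact Finset.sum_le_sum fun x _ => by simpa using map_add_le_add ν (f x) (g x)

lemma l1NormF_smul_le {Λ : Type*} (ν : RingNorm R) (r : R) (f : Λ →₀ R) :
    l1NormF ν (r • f) ≤ ν r * l1NormF ν f := by
  rw [l1NormF_eq ν (r • f) (Finsupp.support_smul), l1NormF_eq ν f (subset_refl _),
    Finset.mul_sum]
  exact Finset.sum_le_sum fun x _ => by
    simpa using map_mul_le_mul ν r (f x)

lemma l1NormF_sum_le {Λ : Type*} (ν : RingNorm R) {ι : Type*} (s : Finset ι)
    (f : ι → Λ →₀ R) : l1NormF ν (∑ i ∈ s, f i) ≤ ∑ i ∈ s, l1NormF ν (f i) := by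
  classical
  induction s using Finset.cons_induction with
  | empty => simp [l1NormF]
  | cons a s ha ih =>
    rw [Finset.sum_cons, Finset.sum_cons]
    exact le_trans (l1NormF_add_le ν _ _) (by linarith)

/-- If a finitely generated module `N` (with a filling norm) is an internal direct summand of
a free module `F = Λ →₀ R` with its ℓ¹-norm, then the filling norm and the restriction of the
ℓ¹-norm are equivalent norms on `N`. -/
theorem fillingNorm_equiv_l1_of_summand {Λ : Type*} (ν : RingNorm R)
    (N N' : Submodule R (Λ →₀ R)) (hcompl : IsCompl N N')
    {Λ' : Type*} [Fintype Λ']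
    (ρ : (Λ' → R) →ₗ[R] N) (hρ : Function.Surjective ρ) :
    ∃ C : ℝ, 0 < C ∧ ∀ n : N,
      C⁻¹ * fillingNorm ν ρ n ≤ l1NormF ν (n : Λ →₀ R) ∧
      l1NormF ν (n : Λ →₀ R) ≤ C * fillingNorm ν ρ n := by
  classical
  let π : (Λ →₀ R) →ₗ[R] N := N.linearProjOfIsCompl N' hcompl
  let σ : N → (Λ' → R) := Function.surjInv hρ
  have hσ : ∀ m : N, ρ (σ m) = m := Function.surjInv_eq hρ
  let e : Λ' → (Λ' → R) := fun i => Pi.single i 1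
  let g : Λ' → (Λ →₀ R) := fun i => (ρ (e i) : Λ →₀ R)
  let S : Finset Λ := Finset.univ.biUnion fun i => (g i).support
  -- every x : Λ' → R writes as combination of basis
  have hx_repr : ∀ x : Λ' → R, ((ρ x : Λ →₀ R)) = ∑ i, x i • g i := by
    intro x
    have hx : x = ∑ i, x i • e i := by
      have : ∀ i, x i • e i = Pi.single i (x i) := by
        intro i
        funext j
        simp [e, Pi.single_apply, mul_ite]
      rw [funext this, Finset.univ_sum_single]
    conv_lhs => rw [hx]
    rw [map_sum]
    push_cast
    simp [g]
  have hsupp : ∀ n : N, ((n : Λ →₀ R)).support ⊆ S := by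
    intro n
    obtain ⟨x, rfl⟩ := hρ n
    rw [hx_repr x]
    refine (Finsupp.support_finset_sum).trans ?_
    intro a ha
    rw [Finset.mem_biUnion] at ha ⊢
    obtain ⟨i, hi, hai⟩ := ha
    exact ⟨i, hi, Finsupp.support_smul hai⟩
  let y : Λ → (Λ' → R) := fun a => σ (π (Finsupp.single a 1))
  let M₂ : ℝ := ∑ a ∈ S, l1Norm ν (y a)
  let M : ℝ := ∑ i, l1NormF ν (g i)
  set C : ℝ := M + M₂ + 1 with hCdef
  have hM₂0 : 0 ≤ M₂ := Finset.sum_nonneg fun a _ => l1Norm_nonneg ν _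
  have hM0 : 0 ≤ M := Finset.sum_nonneg fun i _ => l1NormF_nonneg ν _
  have hC0 : (0:ℝ) < C := by simp only [hCdef]; linarith
  have hM₂C : M₂ ≤ C := by simp only [hCdef]; linarith
  have hMC : M ≤ C := by simp only [hCdef]; linarith
  refine ⟨C, hC0, fun n => ?_⟩
  -- the set of l1-norms of preimages
  have hset_ne : {c : ℝ | ∃ x : Λ' → R, ρ x = n ∧ l1Norm ν x = c}.Nonempty :=
    ⟨l1Norm ν (σ n), σ n, hσ n, rfl⟩
  have hset_bdd : BddBelow {c : ℝ | ∃ x : Λ' → R, ρ x = n ∧ l1Norm ν x = c} :=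
    ⟨0, fun c ⟨x, _, hx⟩ => hx ▸ l1Norm_nonneg ν x⟩
  -- decomposition of n via projection
  have hdec : n = ∑ a ∈ (n : Λ →₀ R).support, (n : Λ →₀ R) a • π (Finsupp.single a 1) := by
    have h1 : (n : Λ →₀ R)
        = ∑ a ∈ (n : Λ →₀ R).support, (n : Λ →₀ R) a • Finsupp.single a 1 := by
      conv_lhs => rw [← Finsupp.sum_single (n : Λ →₀ R)]
      rw [Finsupp.sum]
      exact Finset.sum_congr rfl fun a _ => (Finsupp.smul_single_one a _).symm
    have h2 : π (n : Λ →₀ R) = n := Submodule.linearProjOfIsCompl_apply_left hcompl n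
    conv_lhs => rw [← h2]
    conv_lhs => rw [h1]
    rw [map_sum]
    exact Finset.sum_congr rfl fun a _ => map_smul π _ _
  set xn : Λ' → R := ∑ a ∈ (n : Λ →₀ R).support, (n : Λ →₀ R) a • y a with hxndef
  have hxn : ρ xn = n := by
    have hstep : (∑ a ∈ (n : Λ →₀ R).support, ρ ((n : Λ →₀ R) a • y a))
        = ∑ a ∈ (n : Λ →₀ R).support, (n : Λ →₀ R) a • π (Finsupp.single a 1) :=
      Finset.sum_congr rfl fun a _ => by rw [map_smul, hσ]
    rw [hxndef, map_sum, hstep]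
    exact hdec.symm
  have hfill_le : fillingNorm ν ρ n ≤ l1Norm ν xn :=
    csInf_le hset_bdd ⟨xn, hxn, rfl⟩
  have hxn_le : l1Norm ν xn ≤ M₂ * l1NormF ν (n : Λ →₀ R) := by
    calc l1Norm ν xn ≤ ∑ a ∈ (n : Λ →₀ R).support, l1Norm ν ((n : Λ →₀ R) a • y a) :=
          l1Norm_sum_le ν _ _
      _ ≤ ∑ a ∈ (n : Λ →₀ R).support, ν ((n : Λ →₀ R) a) * l1Norm ν (y a) :=
          Finset.sum_le_sum fun a _ => l1Norm_smul_le ν _ _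
      _ ≤ ∑ a ∈ (n : Λ →₀ R).support, ν ((n : Λ →₀ R) a) * M₂ :=
          Finset.sum_le_sum fun a ha => mul_le_mul_of_nonneg_left
            (Finset.single_le_sum (fun b _ => l1Norm_nonneg ν (y b)) (hsupp n ha))
            (apply_nonneg ν _)
      _ = M₂ * l1NormF ν (n : Λ →₀ R) := by
          rw [l1NormF_eq ν _ (subset_refl _), ← Finset.sum_mul, mul_comm]
  have hfill_nonneg : 0 ≤ fillingNorm ν ρ n :=
    le_csInf hset_ne fun c ⟨x, _, hx⟩ => hx ▸ l1Norm_nonneg ν x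
  -- upper bound: l1NormF n ≤ M * l1Norm x for every preimage x
  have hl1_le : ∀ x : Λ' → R, ρ x = n → l1NormF ν (n : Λ →₀ R) ≤ M * l1Norm ν x := by
    intro x hx
    have hrepr : (n : Λ →₀ R) = ∑ i, x i • g i := by rw [← hx]; exact hx_repr x
    calc l1NormF ν (n : Λ →₀ R) = l1NormF ν (∑ i, x i • g i) := by rw [hrepr]
      _ ≤ ∑ i, l1NormF ν (x i • g i) := l1NormF_sum_le ν _ _
      _ ≤ ∑ i, ν (x i) * l1NormF ν (g i) :=
          Finset.sum_le_sum fun i _ => l1NormF_smul_le ν _ _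
      _ ≤ ∑ i, ν (x i) * M :=
          Finset.sum_le_sum fun i _ => mul_le_mul_of_nonneg_left
            (Finset.single_le_sum (fun j _ => l1NormF_nonneg ν (g j)) (Finset.mem_univ i))
            (apply_nonneg ν _)
      _ = M * l1Norm ν x := by rw [← Finset.sum_mul, mul_comm]; rfl
  constructor
  · -- C⁻¹ * fill ≤ l1NormF
    have h1 : fillingNorm ν ρ n ≤ C * l1NormF ν (n : Λ →₀ R) := by
      refine hfill_le.trans (hxn_le.trans ?_)
      exact mul_le_mul_of_nonneg_right hM₂C (l1NormF_nonneg ν _)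
    calc C⁻¹ * fillingNorm ν ρ n ≤ C⁻¹ * (C * l1NormF ν (n : Λ →₀ R)) :=
          mul_le_mul_of_nonneg_left h1 (inv_nonneg.mpr hC0.le)
      _ = l1NormF ν (n : Λ →₀ R) := by
          rw [← mul_assoc, inv_mul_cancel₀ hC0.ne', one_mul]
  · -- l1NormF ≤ C * fill
    have h2 : C⁻¹ * l1NormF ν (n : Λ →₀ R) ≤ fillingNorm ν ρ n := by
      refine le_csInf hset_ne ?_
      rintro c ⟨x, hx, rfl⟩
      have : l1NormF ν (n : Λ →₀ R) ≤ C * l1Norm ν x :=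
        (hl1_le x hx).trans (mul_le_mul_of_nonneg_right hMC (l1Norm_nonneg ν x))
      calc C⁻¹ * l1NormF ν (n : Λ →₀ R) ≤ C⁻¹ * (C * l1Norm ν x) :=
            mul_le_mul_of_nonneg_left this (inv_nonneg.mpr hC0.le)
        _ = l1Norm ν x := by rw [← mul_assoc, inv_mul_cancel₀ hC0.ne', one_mul]
    calc l1NormF ν (n : Λ →₀ R) = C * (C⁻¹ * l1NormF ν (n : Λ →₀ R)) := by
          rw [← mul_assoc, mul_inv_cancel₀ hC0.ne', one_mul]
      _ ≤ C * fillingNorm ν ρ n := mul_le_mul_of_nonneg_left h2 hC0.le
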